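/- For every integer k ≥ 2 there exists a constant c_k > 0 and an N such that for every n ≥ N there exists a C_{2k}-free graph on n vertices with at least c_k · n^{1 + 1/(2k-1)} edges. -/

import Mathlib

set_option maxHeartbeats 1000000


open Finset

/-- `F.ContainsCopy G` means `G` contains a subgraph isomorphic to `F`,
i.e. there is an injective graph homomorphism from `F` to `G`. -/
def SimpleGraph.ContainsCopy {α β : Type*} (F : SimpleGraph α) (G : SimpleGraph β) : Prop :=
  ∃ f : F →g G, Function.Injective f

/-- `F.FreeIn G` means `G` is `F`-free. -/
def SimpleGraph.FreeIn {α β : Type*} (F : SimpleGraph α) (G : SimpleGraph β) : Prop :=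
  ¬ F.ContainsCopy G

/-- `cliqueCount G r` is the number of `r`-cliques of `G` (copies of `K_r`). -/
noncomputable def cliqueCount {β : Type*} (G : SimpleGraph β) (r : ℕ) : ℕ :=
  Nat.card {s : Finset β // G.IsNClique r s}

/-- `cliqueCountOn G r v` is the number of `r`-cliques of `G` containing the vertex `v`. -/
noncomputable def cliqueCountOn {β : Type*} (G : SimpleGraph β) (r : ℕ) (v : β) : ℕ :=
  Nat.card {s : Finset β // G.IsNClique r s ∧ v ∈ s}

/-- The generalized Turán number `ex(n, K_r, F)`: the maximum number of `r`-cliques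
in an `F`-free graph on `n` vertices. -/
noncomputable def exTuran {α : Type*} (n r : ℕ) (F : SimpleGraph α) : ℕ :=
  sSup {m : ℕ | ∃ G : SimpleGraph (Fin n), F.FreeIn G ∧ m = cliqueCount G r}

/-- `multiCopies m F` is the vertex-disjoint union of `m` copies of `F`. -/
def multiCopies {α : Type*} (m : ℕ) (F : SimpleGraph α) : SimpleGraph (Fin m × α) where
  Adj x y := x.1 = y.1 ∧ F.Adj x.2 y.2
  symm := ⟨fun _ _ h => ⟨h.1.symm, h.2.symm⟩⟩
  loopless := ⟨fun x h => F.loopless.irrefl _ h.2⟩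

/-- The join `G ∨ H` of two vertex-disjoint graphs: their disjoint union together with
all edges between them. -/
def joinG {α β : Type*} (G : SimpleGraph α) (H : SimpleGraph β) : SimpleGraph (α ⊕ β) where
  Adj x y := match x, y with
    | Sum.inl u, Sum.inl v => G.Adj u v
    | Sum.inr u, Sum.inr v => H.Adj u v
    | _, _ => True
  symm := ⟨by rintro (u|u) (v|v) h <;> first | exact h.symm | trivial⟩
  loopless := ⟨by rintro (u|u) h <;> exact absurd h (by simp)⟩

namespace Stmt6Aux

variable {n q K : ℕ} [NeZero q]

/-- The random-ish graph determined by a coloring of potential edges. -/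
def gph (n q : ℕ) [NeZero q] (χ : Sym2 (Fin n) → Fin q) : SimpleGraph (Fin n) where
  Adj u v := u ≠ v ∧ χ s(u, v) = 0
  symm := ⟨fun u v h => ⟨h.1.symm, by rw [Sym2.eq_swap]; exact h.2⟩⟩
  loopless := ⟨fun u h => h.1 rfl⟩

instance (χ : Sym2 (Fin n) → Fin q) : DecidableRel (gph n q χ).Adj :=
  fun _ _ => instDecidableAnd

lemma gph_edge_iff (χ : Sym2 (Fin n) → Fin q) (e : Sym2 (Fin n)) :
    e ∈ (gph n q χ).edgeSet ↔ ¬ e.IsDiag ∧ χ e = 0 := by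
  induction e with
  | _ u v => simp [gph, Sym2.mk_isDiag_iff, SimpleGraph.mem_edgeSet]

lemma gph_edgeFinset_eq (χ : Sym2 (Fin n) → Fin q) :
    (gph n q χ).edgeFinset = univ.filter (fun e => ¬ e.IsDiag ∧ χ e = 0) := by
  ext e
  simp [SimpleGraph.mem_edgeFinset, gph_edge_iff]

/-- Counting colorings that vanish on a prescribed set. -/
lemma card_filter_zero_on {α : Type*} [Fintype α] [DecidableEq α] (q : ℕ) [NeZero q]
    (S : Finset α) :
    (univ.filter (fun χ : α → Fin q => ∀ e ∈ S, χ e = 0)).card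
      = q ^ (Fintype.card α - S.card) := by
  rw [← Fintype.card_subtype]
  have e : {χ : α → Fin q // ∀ e ∈ S, χ e = 0} ≃ ((↥(Sᶜ : Finset α)) → Fin q) :=
    { toFun := fun χ x => χ.1 x.1
      invFun := fun g => ⟨fun x => if h : x ∈ S then 0 else g ⟨x, by simp [h]⟩,
        fun e he => dif_pos he⟩
      left_inv := by
        rintro ⟨χ, hχ⟩
        ext x
        by_cases h : x ∈ S
        · simp [h, hχ x h]
        · simp [h]
      right_inv := by
        intro g
        ext x
        obtain ⟨x, hx⟩ := x
        have : x ∉ S := by simpa using hx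
        simp [this] }
  rw [Fintype.card_congr e, Fintype.card_fun, Fintype.card_coe, Fintype.card_fin,
    Finset.card_compl, Fintype.card]


/-- Double counting: swap the order of a filtered count. -/
lemma sum_card_filter_comm {α β : Type*} [Fintype α] [Fintype β] (p : α → β → Prop)
    [∀ a b, Decidable (p a b)] :
    ∑ a : α, (univ.filter (fun b => p a b)).card
      = ∑ b : β, (univ.filter (fun a => p a b)).card := by
  simp only [Finset.card_filter]
  exact Finset.sum_comm

/-- Expected number of edges. -/
lemma sum_edge_card (n q : ℕ) [NeZero q] :
    ∑ χ : Sym2 (Fin n) → Fin q, (gph n q χ).edgeFinset.card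
      = n.choose 2 * q ^ (Fintype.card (Sym2 (Fin n)) - 1) := by
  classical
  have h1 : ∀ χ : Sym2 (Fin n) → Fin q, (gph n q χ).edgeFinset.card
      = (univ.filter (fun e : Sym2 (Fin n) => ¬ e.IsDiag ∧ χ e = 0)).card := by
    intro χ; rw [gph_edgeFinset_eq]
  calc ∑ χ : Sym2 (Fin n) → Fin q, (gph n q χ).edgeFinset.card
      = ∑ χ : Sym2 (Fin n) → Fin q,
          (univ.filter (fun e : Sym2 (Fin n) => ¬ e.IsDiag ∧ χ e = 0)).card := by
        simp only [h1]
    _ = ∑ e : Sym2 (Fin n),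
          (univ.filter (fun χ : Sym2 (Fin n) → Fin q => ¬ e.IsDiag ∧ χ e = 0)).card := by
        exact sum_card_filter_comm (fun (χ : Sym2 (Fin n) → Fin q) (e : Sym2 (Fin n)) => ¬ e.IsDiag ∧ χ e = 0)
    _ = ∑ e ∈ univ.filter (fun e : Sym2 (Fin n) => ¬ e.IsDiag),
          q ^ (Fintype.card (Sym2 (Fin n)) - 1) := by
        rw [Finset.sum_filter]
        refine Finset.sum_congr rfl (fun e _ => ?_)
        by_cases hd : e.IsDiag
        · simp [hd]
        · have : (univ.filter (fun χ : Sym2 (Fin n) → Fin q => ¬ e.IsDiag ∧ χ e = 0))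
              = (univ.filter (fun χ : Sym2 (Fin n) → Fin q => ∀ x ∈ ({e} : Finset _), χ x = 0)) := by
            ext χ; simp [hd]
          rw [this, card_filter_zero_on, Finset.card_singleton]
          simp [hd]
    _ = n.choose 2 * q ^ (Fintype.card (Sym2 (Fin n)) - 1) := by
        rw [Finset.sum_const, smul_eq_mul]
        congr 1
        rw [← Fintype.card_subtype, Sym2.card_subtype_not_diag, Fintype.card_fin]


/-- Edge count of the cycle graph. -/
lemma cycleGraph_edge_card (K : ℕ) (hK : 3 ≤ K) :
    (SimpleGraph.cycleGraph K).edgeFinset.card = K := by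
  obtain ⟨m, rfl⟩ : ∃ m, K = m + 3 := ⟨K - 3, by omega⟩
  have h := SimpleGraph.sum_degrees_eq_twice_card_edges (SimpleGraph.cycleGraph (m + 3))
  have h2 : ∑ v : Fin (m + 3), (SimpleGraph.cycleGraph (m + 3)).degree v
      = ∑ _v : Fin (m + 3), 2 :=
    Finset.sum_congr rfl (fun v _ => SimpleGraph.cycleGraph_degree_three_le)
  rw [h2] at h
  simp only [Finset.sum_const, Finset.card_univ, Fintype.card_fin, smul_eq_mul] at h
  omega

/-- `f` is an injective homomorphism from the `K`-cycle to `G`. -/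
def isCH (K : ℕ) {n : ℕ} (G : SimpleGraph (Fin n)) (f : Fin K → Fin n) : Prop :=
  Function.Injective f ∧ ∀ i j, (SimpleGraph.cycleGraph K).Adj i j → G.Adj (f i) (f j)

instance (K : ℕ) {n : ℕ} (G : SimpleGraph (Fin n)) [DecidableRel G.Adj] :
    DecidablePred (isCH K G) := fun _ => instDecidableAnd

/-- The number of colorings for which a fixed `f` is a cycle copy. -/
lemma card_filter_isCH_le (n q K : ℕ) [NeZero q] (hK : 3 ≤ K) (f : Fin K → Fin n) :
    (univ.filter (fun χ : Sym2 (Fin n) → Fin q => isCH K (gph n q χ) f)).card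
      ≤ q ^ (Fintype.card (Sym2 (Fin n)) - K) := by
  classical
  by_cases hf : Function.Injective f
  · set S : Finset (Sym2 (Fin n)) :=
      (SimpleGraph.cycleGraph K).edgeFinset.image (Sym2.map f) with hS
    have hcard : S.card = K := by
      rw [hS, Finset.card_image_of_injective _ (Sym2.map.injective hf),
        cycleGraph_edge_card K hK]
    have hiff : ∀ χ : Sym2 (Fin n) → Fin q,
        isCH K (gph n q χ) f ↔ ∀ e ∈ S, χ e = 0 := by
      intro χ
      constructor
      · rintro ⟨-, hhom⟩ e he
        rw [hS, Finset.mem_image] at he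
        obtain ⟨e', he', rfl⟩ := he
        rw [SimpleGraph.mem_edgeFinset] at he'
        induction e' with
        | _ i j =>
          rw [SimpleGraph.mem_edgeSet] at he'
          rw [Sym2.map_pair_eq]
          exact (hhom i j he').2
      · intro hz
        refine ⟨hf, fun i j hij => ⟨fun hEq => (SimpleGraph.cycleGraph K).ne_of_adj hij (hf hEq), ?_⟩⟩
        have : Sym2.map f s(i, j) ∈ S := by
          rw [hS, Finset.mem_image]
          exact ⟨s(i, j), SimpleGraph.mem_edgeFinset.2 hij, rfl⟩
        have := hz _ this
        rwa [Sym2.map_pair_eq] at this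
    have : (univ.filter (fun χ : Sym2 (Fin n) → Fin q => isCH K (gph n q χ) f))
        = (univ.filter (fun χ : Sym2 (Fin n) → Fin q => ∀ e ∈ S, χ e = 0)) := by
      ext χ; simp [hiff χ]
    rw [this, card_filter_zero_on, hcard]
  · have : (univ.filter (fun χ : Sym2 (Fin n) → Fin q => isCH K (gph n q χ) f)) = ∅ := by
      ext χ; simp only [Finset.mem_filter, Finset.notMem_empty, iff_false]
      rintro ⟨-, h, -⟩; exact hf h
    simp [this]

/-- Expected number of cycle copies, bounded. -/
lemma sum_isCH_card_le (n q K : ℕ) [NeZero q] (hK : 3 ≤ K) :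
    ∑ χ : Sym2 (Fin n) → Fin q, (univ.filter (isCH K (gph n q χ))).card
      ≤ n ^ K * q ^ (Fintype.card (Sym2 (Fin n)) - K) := by
  classical
  calc ∑ χ : Sym2 (Fin n) → Fin q, (univ.filter (isCH K (gph n q χ))).card
      = ∑ f : Fin K → Fin n,
          (univ.filter (fun χ : Sym2 (Fin n) → Fin q => isCH K (gph n q χ) f)).card :=
        sum_card_filter_comm (fun (χ : Sym2 (Fin n) → Fin q) (f : Fin K → Fin n) =>
          isCH K (gph n q χ) f)
    _ ≤ ∑ _f : Fin K → Fin n, q ^ (Fintype.card (Sym2 (Fin n)) - K) :=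
        Finset.sum_le_sum (fun f _ => card_filter_isCH_le n q K hK f)
    _ = n ^ K * q ^ (Fintype.card (Sym2 (Fin n)) - K) := by
        rw [Finset.sum_const, Finset.card_univ, Fintype.card_fun, smul_eq_mul,
          Fintype.card_fin, Fintype.card_fin]


/-- The pruned graph: remove the special edge of every cycle copy. -/
def gph' (n q K : ℕ) [NeZero q] (hK : 3 ≤ K) (χ : Sym2 (Fin n) → Fin q) :
    SimpleGraph (Fin n) where
  Adj u v := (gph n q χ).Adj u v ∧ ∀ f : Fin K → Fin n, isCH K (gph n q χ) f →
    Sym2.map f s(⟨0, by omega⟩, ⟨1, by omega⟩) ≠ s(u, v)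
  symm := ⟨fun u v h => ⟨h.1.symm, fun f hf hEq => h.2 f hf (hEq.trans (Sym2.eq_swap))⟩⟩
  loopless := ⟨fun u h => (gph n q χ).loopless.irrefl u h.1⟩

instance (n q K : ℕ) [NeZero q] (hK : 3 ≤ K) (χ : Sym2 (Fin n) → Fin q) :
    DecidableRel (gph' n q K hK χ).Adj := fun _ _ => instDecidableAnd

/-- The special edge: `cycleGraph K` joins `0` and `1`. -/
lemma cycle_adj_01 (K : ℕ) (hK : 3 ≤ K) :
    (SimpleGraph.cycleGraph K).Adj ⟨0, by omega⟩ ⟨1, by omega⟩ := by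
  rw [SimpleGraph.cycleGraph_adj']
  right
  have : ((⟨1, by omega⟩ : Fin K) - ⟨0, by omega⟩ : Fin K) = ⟨1, by omega⟩ := by
    apply Fin.ext
    simp [Fin.sub_def, Nat.mod_eq_of_lt (show 1 < K by omega)]
  rw [this]

/-- The pruned graph has no copy of the `K`-cycle. -/
lemma gph'_free (n q K : ℕ) [NeZero q] (hK : 3 ≤ K) (χ : Sym2 (Fin n) → Fin q) :
    (SimpleGraph.cycleGraph K).FreeIn (gph' n q K hK χ) := by
  rintro ⟨g, hg⟩
  have hCH : isCH K (gph n q χ) g := by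
    refine ⟨hg, fun i j hij => ((g.map_adj hij).1 : (gph n q χ).Adj _ _)⟩
  have hadj : (gph' n q K hK χ).Adj (g ⟨0, by omega⟩) (g ⟨1, by omega⟩) :=
    g.map_adj (cycle_adj_01 K hK)
  exact hadj.2 g hCH (by rw [Sym2.map_pair_eq])

/-- Edge count of the pruned graph. -/
lemma gph'_card (n q K : ℕ) [NeZero q] (hK : 3 ≤ K) (χ : Sym2 (Fin n) → Fin q) :
    (gph n q χ).edgeFinset.card
      ≤ (gph' n q K hK χ).edgeFinset.card + (univ.filter (isCH K (gph n q χ))).card := by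
  classical
  set D : Finset (Sym2 (Fin n)) :=
    (univ.filter (isCH K (gph n q χ))).image
      (fun f => Sym2.map f s(⟨0, by omega⟩, ⟨1, by omega⟩)) with hD
  have hsub : (gph n q χ).edgeFinset ⊆ (gph' n q K hK χ).edgeFinset ∪ D := by
    intro e he
    by_cases hd : e ∈ D
    · exact Finset.mem_union_right _ hd
    · refine Finset.mem_union_left _ ?_
      rw [SimpleGraph.mem_edgeFinset] at he ⊢
      induction e with
      | _ u v =>
        rw [SimpleGraph.mem_edgeSet] at he ⊢
        refine ⟨he, fun f hf hEq => hd ?_⟩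
        rw [hD, Finset.mem_image]
        exact ⟨f, Finset.mem_filter.2 ⟨Finset.mem_univ f, hf⟩, hEq⟩
  calc (gph n q χ).edgeFinset.card ≤ ((gph' n q K hK χ).edgeFinset ∪ D).card :=
        Finset.card_le_card hsub
    _ ≤ (gph' n q K hK χ).edgeFinset.card + D.card := Finset.card_union_le _ _
    _ ≤ (gph' n q K hK χ).edgeFinset.card + (univ.filter (isCH K (gph n q χ))).card := by
        exact Nat.add_le_add_left (Finset.card_image_le) _


/-- Combinatorial core: if the numeric inequality holds, a good graph exists. -/
lemma exists_good (n q K t : ℕ) [NeZero q] (hK : 3 ≤ K)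
    (hmain : n ^ K * q ^ (Fintype.card (Sym2 (Fin n)) - K)
        + q ^ (Fintype.card (Sym2 (Fin n))) * t
      ≤ n.choose 2 * q ^ (Fintype.card (Sym2 (Fin n)) - 1)) :
    ∃ G : SimpleGraph (Fin n), (SimpleGraph.cycleGraph K).FreeIn G ∧ t ≤ Nat.card G.edgeSet := by
  classical
  have hne : (univ : Finset (Sym2 (Fin n) → Fin q)).Nonempty := ⟨fun _ => 0, Finset.mem_univ _⟩
  have hsum : ∑ χ : Sym2 (Fin n) → Fin q, ((univ.filter (isCH K (gph n q χ))).card + t)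
      ≤ ∑ χ : Sym2 (Fin n) → Fin q, (gph n q χ).edgeFinset.card := by
    rw [Finset.sum_add_distrib, Finset.sum_const, Finset.card_univ, Fintype.card_fun,
      Fintype.card_fin, smul_eq_mul, sum_edge_card n q]
    calc (∑ χ : Sym2 (Fin n) → Fin q, (univ.filter (isCH K (gph n q χ))).card)
          + q ^ (Fintype.card (Sym2 (Fin n))) * t
        ≤ n ^ K * q ^ (Fintype.card (Sym2 (Fin n)) - K)
          + q ^ (Fintype.card (Sym2 (Fin n))) * t :=
          Nat.add_le_add_right (sum_isCH_card_le n q K hK) _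
      _ ≤ n.choose 2 * q ^ (Fintype.card (Sym2 (Fin n)) - 1) := hmain
  obtain ⟨χ, -, hχ⟩ := Finset.exists_le_of_sum_le hne hsum
  refine ⟨gph' n q K hK χ, gph'_free n q K hK χ, ?_⟩
  have hcard := gph'_card n q K hK χ
  have : t ≤ (gph' n q K hK χ).edgeFinset.card := by omega
  rwa [Nat.card_coe_set_eq, Set.ncard_eq_toFinset_card']

end Stmt6Aux

lemma two_mul_choose_two (n : ℕ) : 2 * n.choose 2 = n * (n - 1) := by
  rcases n with _ | m
  · simp
  · rw [Nat.choose_two_right, Nat.succ_sub_one]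
    refine Nat.mul_div_cancel' ?_
    rw [Nat.mul_comm]
    exact (Nat.even_mul_succ_self m).two_dvd


open Stmt6Aux in
/-- dense `C_{2k}`-free graphs exist. -/
theorem stmt6 (k : ℕ) (hk : 2 ≤ k) :
    ∃ c : ℝ, 0 < c ∧ ∃ N : ℕ, ∀ n : ℕ, N ≤ n → ∃ G : SimpleGraph (Fin n),
      (SimpleGraph.cycleGraph (2 * k)).FreeIn G ∧
      c * (n : ℝ) ^ ((1 : ℝ) + 1 / (2 * (k : ℝ) - 1)) ≤ (Nat.card G.edgeSet : ℝ) := by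
  classical
  set K : ℕ := 2 * k with hKdef
  have hK : 3 ≤ K := by omega
  have hK4 : 4 ≤ K := by omega
  set c : ℝ := 1 / (2 * 4 ^ K) with hc
  have hc0 : 0 < c := by positivity
  refine ⟨c, hc0, 2 * 4 ^ K + 2 * k + 2, fun n hn => ?_⟩
  -- real abbreviations
  set x : ℝ := (n : ℝ) with hxdef
  set r : ℝ := 2 * (k : ℝ) - 1 with hrdef
  have hr3 : (3 : ℝ) ≤ r := by
    have : (2 : ℝ) ≤ (k : ℝ) := by exact_mod_cast hk
    rw [hrdef]; linarith
  have hr0 : r ≠ 0 := by linarith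
  have hrK : r = (K : ℝ) - 1 := by
    rw [hrdef, hKdef]; push_cast; ring
  set a : ℝ := (r - 1) / r with hadef
  set p : ℝ := 1 + 1 / r with hpdef
  have hap : a + p = 2 := by rw [hadef, hpdef]; field_simp; ring
  have ha0 : 0 ≤ a := by
    rw [hadef]; exact div_nonneg (by linarith) (by linarith)
  have hp1 : 1 ≤ p := by
    rw [hpdef]; have : 0 < 1 / r := by positivity
    linarith
  -- basic bounds on x
  have hxN : (2 * 4 ^ K + 2 * k + 2 : ℕ) ≤ (n : ℕ) := hn
  have hx2 : (2 : ℝ) ≤ x := by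
    rw [hxdef]; exact_mod_cast (by omega : 2 ≤ n)
  have hx0 : (0 : ℝ) < x := by linarith
  have hx1 : (1 : ℝ) ≤ x := by linarith
  have hxbig : (2 : ℝ) * 4 ^ K ≤ x := by
    rw [hxdef]
    calc (2 : ℝ) * 4 ^ K = ((2 * 4 ^ K : ℕ) : ℝ) := by push_cast; ring
      _ ≤ (n : ℝ) := by exact_mod_cast (by omega : 2 * 4 ^ K ≤ n)
  set A : ℝ := x ^ a with hAdef
  have hA1 : (1 : ℝ) ≤ A := Real.one_le_rpow hx1 ha0
  have hA0 : (0 : ℝ) < A := by linarith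
  -- the integer parameters
  set Q : ℕ := 2 * ⌈A⌉₊ with hQdef
  have hceil : (1 : ℕ) ≤ ⌈A⌉₊ := by
    rw [Nat.one_le_ceil_iff]; linarith
  haveI : NeZero Q := ⟨by omega⟩
  set t : ℕ := ⌈c * x ^ p⌉₊ with htdef
  -- bounds on Q and t
  have hQl : 2 * A ≤ (Q : ℝ) := by
    rw [hQdef]; push_cast
    have := Nat.le_ceil A
    linarith
  have hQu : (Q : ℝ) ≤ 4 * A := by
    rw [hQdef]; push_cast
    have := Nat.ceil_lt_add_one (by linarith : (0:ℝ) ≤ A)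
    linarith
  have hQ0 : (0 : ℝ) ≤ (Q : ℝ) := by positivity
  have htl : c * x ^ p ≤ (t : ℝ) := Nat.le_ceil _
  have htu : (t : ℝ) ≤ c * x ^ p + 1 := by
    have := Nat.ceil_lt_add_one (by positivity : (0:ℝ) ≤ c * x ^ p)
    linarith
  -- rpow exponent identities
  have hpow : ∀ m : ℕ, A ^ m = x ^ (a * m) := by
    intro m
    rw [hAdef, ← Real.rpow_natCast (x ^ a) m, ← Real.rpow_mul hx0.le]
  have hxK : x ^ (K : ℕ) = x ^ ((K : ℝ)) := (Real.rpow_natCast x K).symm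
  have hKr : (K : ℝ) = r + 1 := by rw [hrK]; ring
  have hA2 : A ^ K * x ^ p = x ^ (K : ℕ) := by
    rw [hpow K, ← Real.rpow_add hx0, hxK]
    congr 1
    rw [hadef, hpdef, hKr]
    field_simp
    ring
  have hA1' : A ^ (K - 1) * x ^ (2 : ℝ) = x ^ (K : ℕ) := by
    rw [hpow (K - 1), ← Real.rpow_add hx0, hxK]
    congr 1
    have hKm : ((K - 1 : ℕ) : ℝ) = r := by
      rw [hrK]; push_cast [Nat.cast_sub (by omega : 1 ≤ K)]; ring
    rw [hKm, hadef, div_mul_cancel₀ _ hr0]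
    linarith [hKr]
  -- bound on x^p
  have hxp_big : (2 : ℝ) * 4 ^ K ≤ x ^ p := by
    calc (2 : ℝ) * 4 ^ K ≤ x := hxbig
      _ = x ^ (1 : ℝ) := (Real.rpow_one x).symm
      _ ≤ x ^ p := Real.rpow_le_rpow_of_exponent_le hx1 hp1
  have hxp0 : (0 : ℝ) < x ^ p := Real.rpow_pos_of_pos hx0 _
  have hAK0 : (0 : ℝ) ≤ A ^ K := by positivity
  have hA3 : (4 : ℝ) ^ K * A ^ K ≤ x ^ (K : ℕ) / 2 := by
    have key := mul_le_mul_of_nonneg_left hxp_big hAK0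
    rw [hA2] at key
    have : (4 : ℝ) ^ K * A ^ K = (A ^ K * (2 * 4 ^ K)) / 2 := by ring
    rw [this]
    linarith [key]
  -- choose bound
  have hchoose : x ^ 2 / 4 ≤ (n.choose 2 : ℝ) := by
    have h2c : 2 * n.choose 2 = n * (n - 1) := two_mul_choose_two n
    have hcast : (2 : ℝ) * (n.choose 2 : ℝ) = x * (x - 1) := by
      rw [hxdef]
      rw [← Nat.cast_ofNat, ← Nat.cast_mul, h2c]
      push_cast [Nat.cast_sub (by omega : 1 ≤ n)]
      ring
    have hxx : x * 2 ≤ x * x := mul_le_mul_of_nonneg_left hx2 hx0.le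
    nlinarith [hcast, hxx]
  -- the core real inequality
  have hcore : (x ^ (K : ℕ) + (Q : ℝ) ^ K * (t : ℝ)) ≤ (n.choose 2 : ℝ) * (Q : ℝ) ^ (K - 1) := by
    have ht0 : (0 : ℝ) ≤ (t : ℝ) := Nat.cast_nonneg t
    have step1 : (Q : ℝ) ^ K * (t : ℝ) ≤ (4 * A) ^ K * (c * x ^ p + 1) := by
      apply mul_le_mul (pow_le_pow_left₀ hQ0 hQu K) htu ht0 (by positivity)
    have step2 : (4 * A) ^ K * (c * x ^ p + 1)
        = 4 ^ K * c * (A ^ K * x ^ p) + 4 ^ K * A ^ K := by ring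
    have h4c : (4 : ℝ) ^ K * c = 1 / 2 := by
      rw [hc]; field_simp
    have step3 : (Q : ℝ) ^ K * (t : ℝ) ≤ x ^ (K : ℕ) / 2 + x ^ (K : ℕ) / 2 := by
      rw [step2] at step1
      rw [hA2, h4c] at step1
      linarith [hA3]
    have step4 : (x ^ 2 / 4) * ((2 * A) ^ (K - 1)) ≤ (n.choose 2 : ℝ) * (Q : ℝ) ^ (K - 1) := by
      apply mul_le_mul hchoose (pow_le_pow_left₀ (by positivity) hQl (K - 1)) (by positivity)
        (by positivity)
    have step5 : (x ^ 2 / 4) * ((2 * A) ^ (K - 1)) = (2 ^ (K - 1) / 4) * x ^ (K : ℕ) := by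
      rw [mul_pow, ← hA1']
      have h22 : x ^ (2 : ℝ) = x ^ (2 : ℕ) := by
        rw [← Real.rpow_natCast x 2]; norm_num
      rw [← h22]
      ring
    have h8 : (8 : ℝ) ≤ 2 ^ (K - 1) := by
      calc (8 : ℝ) = 2 ^ 3 := by norm_num
        _ ≤ 2 ^ (K - 1) := pow_le_pow_right₀ (by norm_num) (by omega)
    have hxK0 : (0 : ℝ) ≤ x ^ (K : ℕ) := by positivity
    rw [step5] at step4
    have h8' : (2 : ℝ) ≤ 2 ^ (K - 1) / 4 := by linarith
    have h2x : (2 : ℝ) * x ^ (K : ℕ) ≤ (2 ^ (K - 1) / 4) * x ^ (K : ℕ) :=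
      mul_le_mul_of_nonneg_right h8' hxK0
    linarith [step3, step4, h2x]
  -- convert to the natural number inequality
  set M : ℕ := Fintype.card (Sym2 (Fin n)) with hM
  have hMK : K ≤ M := by
    have hinj : Function.Injective (fun i : Fin n => s(i, i)) := by
      intro i j h
      simpa [Sym2.eq_iff] using h
    have h1 : n ≤ M := by
      have := Fintype.card_le_of_injective _ hinj
      simpa [hM, Fintype.card_fin] using this
    have h2 : K ≤ n := by
      calc K = 2 * k := hKdef
        _ ≤ 2 * 4 ^ K + 2 * k + 2 := by linarith [Nat.zero_le (2 * 4 ^ K)]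
        _ ≤ n := hn
    exact le_trans h2 h1
    
  have hcoreN : n ^ K + Q ^ K * t ≤ n.choose 2 * Q ^ (K - 1) := by
    have := hcore
    rw [hxdef] at this
    exact_mod_cast this
  have hmain : n ^ K * Q ^ (M - K) + Q ^ M * t ≤ n.choose 2 * Q ^ (M - 1) := by
    have e1 : Q ^ (M - 1) = Q ^ (K - 1) * Q ^ (M - K) := by
      rw [← pow_add]; congr 1; omega
    have e2 : Q ^ M = Q ^ K * Q ^ (M - K) := by
      rw [← pow_add]; congr 1; omega
    calc n ^ K * Q ^ (M - K) + Q ^ M * t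
        = (n ^ K + Q ^ K * t) * Q ^ (M - K) := by rw [e2]; ring
      _ ≤ (n.choose 2 * Q ^ (K - 1)) * Q ^ (M - K) :=
          Nat.mul_le_mul_right _ hcoreN
      _ = n.choose 2 * Q ^ (M - 1) := by rw [e1]; ring
  obtain ⟨G, hfree, hedge⟩ := exists_good n Q K t hK hmain
  refine ⟨G, hfree, ?_⟩
  calc c * x ^ ((1 : ℝ) + 1 / (2 * (k : ℝ) - 1)) = c * x ^ p := by rw [hpdef, hrdef]
    _ ≤ (t : ℝ) := htl
    _ ≤ (Nat.card G.edgeSet : ℝ) := by exact_mod_cast hedge
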